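/- arXiv:2407.04032 — 4 statements merged into one kernel-verified Lean document; each statement's English description precedes it below -/
import Mathlib

section
/- Let γ ∈ C¹(ℝ/ℤ, ℝ²) be an arclength-parametrized immersion with finitely many self-intersections, all transverse double points, and let Λ(γ) > 0 denote the minimal intrinsic distance between any two distinct self-intersection parameters. If (u,v) is a self-intersection pair (u < v, γ(u) = γ(v)), δ ≤ Λ(γ)/4, and τ ∈ [0,1/2] satisfies |γ'(s+w) - γ'(s)| ≤ 1/2 for all s and |w| ≤ τ, then |u - v|_{ℝ/ℤ} - 2δ > τ. -/
open Set

/-- Periodic distance on `ℝ/ℤ`. -/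
noncomputable def pdist (x y : ℝ) : ℝ := ⨅ k : ℤ, |x - y + k|

theorem stmt2 (γ : ℝ → EuclideanSpace ℝ (Fin 2))
    (hper : ∀ t, γ (t + 1) = γ t) (hC1 : ContDiff ℝ 1 γ)
    (harc : ∀ t, ‖deriv γ t‖ = 1)
    (Λ : ℝ) (hΛpos : 0 < Λ)
    (u v : ℝ) (huv : u < v) (hsi : γ u = γ v)
    (hsep : Λ ≤ pdist u v)
    (δ τ : ℝ) (hδ : 0 < δ) (hδΛ : δ ≤ Λ / 4)
    (hτ : τ ∈ Icc (0 : ℝ) (1/2))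
    (hosc : ∀ s w : ℝ, |w| ≤ τ → ‖deriv γ (s + w) - deriv γ s‖ ≤ 1/2) :
    pdist u v - 2 * δ > τ := by
  set m := pdist u v with hm
  set c := u - v with hc
  have hperk : ∀ (k : ℤ) (t : ℝ), γ (t + k) = γ t := by
    intro k t
    have hP : Function.Periodic γ 1 := hper
    have := (hP.int_mul k) t
    simpa using this
  have hbdd : BddBelow (Set.range fun k : ℤ => |c + k|) := by
    refine ⟨0, ?_⟩
    rintro x ⟨k, rfl⟩
    positivity
  have hle : ∀ k : ℤ, m ≤ |c + k| := fun k => ciInf_le hbdd k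
  have hattain : m = |c - round c| := by
    apply le_antisymm
    · have := hle (-round c)
      simpa [sub_eq_add_neg] using this
    · apply le_ciInf
      intro k
      have := round_le c (-k)
      simpa [sub_eq_add_neg, hc] using this
  have hmpos : 0 < m := lt_of_lt_of_le hΛpos hsep
  -- find a with γ (a+m) = γ a
  obtain ⟨a, ha⟩ : ∃ a : ℝ, γ (a + m) = γ a := by
    rcases abs_cases (c - round c) with ⟨h1, _⟩ | ⟨h1, _⟩
    · refine ⟨v, ?_⟩
      have hv : v + m = u + (-(round c) : ℤ) := by
        rw [hattain, h1]; push_cast; simp only [hc]; ring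
      rw [hv, hperk]
      exact hsi
    · refine ⟨u + ((-(round c) : ℤ) : ℝ), ?_⟩
      have hv : u + ((-(round c) : ℤ) : ℝ) + m = v := by
        rw [hattain, h1]; push_cast; simp only [hc]; ring
      rw [hv, hperk]
      exact hsi.symm
  by_contra hcon
  push_neg at hcon
  have hδm : δ ≤ m / 4 := le_trans hδΛ (by linarith)
  have hm2τ : m / 2 ≤ τ := by linarith
  -- FTC setup
  have hdiff : Differentiable ℝ γ := hC1.differentiable one_ne_zero
  have hcont : Continuous (deriv γ) := hC1.continuous_deriv le_rfl
  have hFTC : (∫ t in a..(a+m), deriv γ t) = γ (a+m) - γ a :=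
    intervalIntegral.integral_deriv_eq_sub (fun t _ => hdiff t)
      (hcont.intervalIntegrable _ _)
  set D := deriv γ (a + m/2) with hD
  have hsub : (∫ t in a..(a+m), (deriv γ t - D)) = (γ (a+m) - γ a) - m • D := by
    rw [intervalIntegral.integral_sub (hcont.intervalIntegrable _ _)
      (intervalIntegrable_const), hFTC, intervalIntegral.integral_const]
    simp
  have hbound : ‖∫ t in a..(a+m), (deriv γ t - D)‖ ≤ (1/2) * |a + m - a| := by
    apply intervalIntegral.norm_integral_le_of_norm_le_const
    intro t ht
    rw [Set.uIoc_of_le (by linarith : a ≤ a + m)] at ht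
    have hw : |t - (a + m/2)| ≤ τ := by
      rw [abs_le]
      constructor <;> [linarith [ht.1, hm2τ]; linarith [ht.2, hm2τ]]
    have := hosc (a + m/2) (t - (a + m/2)) hw
    simpa using this
  rw [hsub, ha, sub_self, zero_sub, norm_neg, norm_smul, harc,
    Real.norm_eq_abs, abs_of_pos hmpos, mul_one] at hbound
  rw [abs_of_pos (by linarith : (0:ℝ) < a + m - a)] at hbound
  linarith
end

section
/- Let q > 2 and let γ ∈ W^{2-1/q, q}(ℝ/ℤ, ℝ²) be an arclength-parametrized curve with finitely many transverse double-point self-intersections. Suppose there is a constant c > 0 with |x-y|_{ℝ/ℤ} ≤ c |γ(x) - γ(y)| for all (x,y) outside the truncated region Y_δ(γ). Then TP_{q,δ}(γ) ≤ (2c²)^q · (1/q) · [γ']^q_{1-1/q, q} < ∞, where [γ']_{1-1/q,q} is the Gagliardo seminorm of γ' of order 1-1/q in L^q. -/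
open MeasureTheory Set
open scoped ENNReal

/-- The affine tangent line of the curve `γ` at the parameter `x`. -/
def tangentLine (γ : ℝ → EuclideanSpace ℝ (Fin 2)) (x : ℝ) : Set (EuclideanSpace ℝ (Fin 2)) :=
  {p | ∃ c : ℝ, p = γ x + c • deriv γ x}

/-- Truncated tangent-point energy of an arclength parametrized curve, written in
`(x,w)`-coordinates (`y = x + w`), over a truncated parameter domain `D`. -/
noncomputable def tpE (q : ℝ) (γ : ℝ → EuclideanSpace ℝ (Fin 2)) (D : Set (ℝ × ℝ)) : ℝ≥0∞ :=
  ∫⁻ p in D, ENNReal.ofReal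
    ((2 * Metric.infDist (γ (p.1 + p.2)) (tangentLine γ p.1) /
        ‖γ (p.1 + p.2) - γ p.1‖ ^ 2) ^ q)

/-- Gagliardo seminorm `[f]^q_{1-1/q,q}` (to the `q`-th power) of a 1-periodic function. -/
noncomputable def gagliardo (q : ℝ) (f : ℝ → EuclideanSpace ℝ (Fin 2)) : ℝ≥0∞ :=
  ∫⁻ x in Ioc (0 : ℝ) 1, ∫⁻ w in Icc (-(1/2) : ℝ) (1/2),
    ENNReal.ofReal (‖f (x + w) - f x‖ ^ q / |w| ^ q)


lemma lint_neg (g : ℝ → ℝ≥0∞) (s : Set ℝ) (hs : MeasurableSet s) :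
    ∫⁻ x in s, g x = ∫⁻ x in Neg.neg ⁻¹' s, g (-x) := by
  have h0 : Measure.map Neg.neg (volume : Measure ℝ) = volume := Measure.map_neg_eq_self volume
  have he : MeasurableEmbedding (Neg.neg : ℝ → ℝ) := (Homeomorph.neg ℝ).measurableEmbedding
  conv_lhs => rw [← h0]
  rw [Measure.restrict_map measurable_neg hs, he.lintegral_map]

lemma key_int (q : ℝ) (hq : 1 < q) {s : ℝ} (hs : 0 < s) :
    ∫⁻ w in Icc s (1/2 : ℝ), (ENNReal.ofReal w) ^ (-q - 1)
      ≤ ENNReal.ofReal (1/q) * (ENNReal.ofReal s) ^ (-q) := by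
  have h1 : ∫⁻ w in Icc s (1/2 : ℝ), (ENNReal.ofReal w) ^ (-q-1)
      ≤ ∫⁻ w in Ioi s, (ENNReal.ofReal w) ^ (-q-1) := by
    rw [Measure.restrict_congr_set Ioi_ae_eq_Ici]
    exact lintegral_mono_set Icc_subset_Ici_self
  have h2 : ∫⁻ w in Ioi s, (ENNReal.ofReal w) ^ (-q-1)
      = ∫⁻ w in Ioi s, ENNReal.ofReal (w ^ (-q-1)) := by
    refine setLIntegral_congr_fun_ae measurableSet_Ioi (ae_of_all _ fun w hw => ?_)
    rw [ENNReal.ofReal_rpow_of_pos (hs.trans hw)]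
  have hint : IntegrableOn (fun w : ℝ => w ^ (-q-1)) (Ioi s) :=
    integrableOn_Ioi_rpow_of_lt (by linarith) hs
  have h3 : ∫⁻ w in Ioi s, ENNReal.ofReal (w ^ (-q-1))
      = ENNReal.ofReal (∫ w in Ioi s, w ^ (-q-1)) := by
    rw [← ofReal_integral_eq_lintegral_ofReal hint]
    filter_upwards [ae_restrict_mem measurableSet_Ioi] with w hw
    exact Real.rpow_nonneg (hs.trans hw).le _
  have h4 : (∫ w in Ioi s, w ^ (-q-1)) = 1/q * s ^ (-q) := by
    rw [integral_Ioi_rpow_of_lt (by linarith) hs]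
    have : -q - 1 + 1 = -q := by ring
    rw [this]
    field_simp
  rw [h2, h3, h4, ENNReal.ofReal_mul (by positivity), ← ENNReal.ofReal_rpow_of_pos hs] at h1
  exact h1

lemma hardy (q : ℝ) (hq : 1 < q) (F : ℝ → ℝ≥0∞) (hF : Measurable F) :
    ∫⁻ w in Ioc (0:ℝ) (1/2), (ENNReal.ofReal w) ^ (-q-1) * ∫⁻ s in Ioc (0:ℝ) w, F s
      ≤ ENNReal.ofReal (1/q) * ∫⁻ s in Ioc (0:ℝ) (1/2), (ENNReal.ofReal s) ^ (-q) * F s := by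
  set Φ : ℝ → ℝ → ℝ≥0∞ := fun w s =>
    Set.indicator (Iic w) (fun s => (ENNReal.ofReal w) ^ (-q-1) * F s) s with hΦ
  have hmeas : AEMeasurable (Function.uncurry Φ)
      ((volume.restrict (Ioc (0:ℝ) (1/2))).prod (volume.restrict (Ioc (0:ℝ) (1/2)))) := by
    have : Function.uncurry Φ = Set.indicator {p : ℝ × ℝ | p.2 ≤ p.1}
        (fun p => (ENNReal.ofReal p.1) ^ (-q-1) * F p.2) := by
      ext ⟨w, s⟩
      simp only [Function.uncurry, hΦ, Set.indicator_apply, mem_Iic, mem_setOf_eq]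
    rw [this]
    refine (Measurable.indicator ?_ ?_).aemeasurable
    · exact ((ENNReal.measurable_ofReal.comp measurable_fst).pow_const _).mul
        (hF.comp measurable_snd)
    · exact measurableSet_le measurable_snd measurable_fst
  have step1 : ∀ w ∈ Ioc (0:ℝ) (1/2),
      (ENNReal.ofReal w) ^ (-q-1) * ∫⁻ s in Ioc (0:ℝ) w, F s
        = ∫⁻ s in Ioc (0:ℝ) (1/2), Φ w s := by
    intro w hw
    have h0 : ∫⁻ s in Ioc (0:ℝ) (1/2), Φ w s
        = ∫⁻ s in Ioc (0:ℝ) (1/2), (Iic w).indicator (fun s => (ENNReal.ofReal w) ^ (-q-1) * F s) s := rfl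
    rw [h0, lintegral_indicator measurableSet_Iic, Measure.restrict_restrict measurableSet_Iic]
    have : Iic w ∩ Ioc (0:ℝ) (1/2) = Ioc 0 w := by
      ext t; simp only [mem_inter_iff, mem_Iic, mem_Ioc]
      constructor
      · rintro ⟨h1, h2, h3⟩; exact ⟨h2, h1⟩
      · rintro ⟨h1, h2⟩; exact ⟨h2, h1, h2.trans hw.2⟩
    rw [this, lintegral_const_mul _ hF]
  have step2 : ∫⁻ w in Ioc (0:ℝ) (1/2), (ENNReal.ofReal w) ^ (-q-1) * ∫⁻ s in Ioc (0:ℝ) w, F s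
      = ∫⁻ s in Ioc (0:ℝ) (1/2), ∫⁻ w in Ioc (0:ℝ) (1/2), Φ w s := by
    rw [setLIntegral_congr_fun_ae measurableSet_Ioc (ae_of_all _ step1)]
    exact lintegral_lintegral_swap hmeas
  rw [step2]
  have step3 : ∀ s ∈ Ioc (0:ℝ) (1/2),
      ∫⁻ w in Ioc (0:ℝ) (1/2), Φ w s
        ≤ ENNReal.ofReal (1/q) * ((ENNReal.ofReal s) ^ (-q) * F s) := by
    intro s hs
    have heq : ∀ w, Φ w s = Set.indicator (Ici s) (fun w => (ENNReal.ofReal w) ^ (-q-1) * F s) w := by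
      intro w
      rfl
    calc ∫⁻ w in Ioc (0:ℝ) (1/2), Φ w s
        = ∫⁻ w in Ioc (0:ℝ) (1/2), Set.indicator (Ici s)
            (fun w => (ENNReal.ofReal w) ^ (-q-1) * F s) w := by
          exact lintegral_congr fun w => heq w
      _ = ∫⁻ w in Ici s ∩ Ioc (0:ℝ) (1/2), (ENNReal.ofReal w) ^ (-q-1) * F s := by
          rw [lintegral_indicator measurableSet_Ici, Measure.restrict_restrict measurableSet_Ici]
      _ = ∫⁻ w in Icc s (1/2), (ENNReal.ofReal w) ^ (-q-1) * F s := by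
          have hset : Ici s ∩ Ioc (0:ℝ) (1/2) = Icc s (1/2) := by
            ext t
            simp only [mem_inter_iff, mem_Ici, mem_Ioc, mem_Icc]
            constructor
            · rintro ⟨h1, _, h3⟩; exact ⟨h1, h3⟩
            · rintro ⟨h1, h2⟩; exact ⟨h1, hs.1.trans_le h1, h2⟩
          rw [hset]
      _ = (∫⁻ w in Icc s (1/2), (ENNReal.ofReal w) ^ (-q-1)) * F s := by
          rw [lintegral_mul_const _ ((ENNReal.measurable_ofReal).pow_const _)]
      _ ≤ (ENNReal.ofReal (1/q) * (ENNReal.ofReal s) ^ (-q)) * F s :=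
          mul_le_mul_left (key_int q hq hs.1) _
      _ = ENNReal.ofReal (1/q) * ((ENNReal.ofReal s) ^ (-q) * F s) := by rw [mul_assoc]
  calc ∫⁻ s in Ioc (0:ℝ) (1/2), ∫⁻ w in Ioc (0:ℝ) (1/2), Φ w s
      ≤ ∫⁻ s in Ioc (0:ℝ) (1/2), ENNReal.ofReal (1/q) * ((ENNReal.ofReal s) ^ (-q) * F s) :=
        setLIntegral_mono' measurableSet_Ioc step3
    _ = ENNReal.ofReal (1/q) * ∫⁻ s in Ioc (0:ℝ) (1/2), (ENNReal.ofReal s) ^ (-q) * F s :=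
        lintegral_const_mul' _ _ ENNReal.ofReal_ne_top

lemma claim1 (q : ℝ) (hq : 1 < q) (γ : ℝ → EuclideanSpace ℝ (Fin 2)) (hC1 : ContDiff ℝ 1 γ)
    (x w : ℝ) :
    ENNReal.ofReal (‖γ (x + w) - γ x - w • deriv γ x‖ ^ q / |w| ^ (2*q))
      ≤ (ENNReal.ofReal |w|) ^ (-q-1) *
        ∫⁻ s in Set.uIoc 0 w, ENNReal.ofReal (‖deriv γ (x + s) - deriv γ x‖ ^ q) := by
  have hq0 : (0:ℝ) < q := by linarith
  by_cases hw : w = 0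
  · subst hw
    rw [abs_zero, Real.zero_rpow (by positivity), div_zero, ENNReal.ofReal_zero]
    exact bot_le
  have hw0 : 0 < |w| := abs_pos.mpr hw
  have hγd : Differentiable ℝ γ := hC1.differentiable one_ne_zero
  have hγ' : Continuous (deriv γ) := hC1.continuous_deriv le_rfl
  set g : ℝ → EuclideanSpace ℝ (Fin 2) := fun s => deriv γ (x + s) - deriv γ x with hg
  have hgc : Continuous g := ((hγ'.comp (continuous_const.add continuous_id)).sub continuous_const)
  set Δ : EuclideanSpace ℝ (Fin 2) := γ (x + w) - γ x - w • deriv γ x with hΔdef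
  -- FTC
  have hderiv : ∀ s : ℝ, HasDerivAt (fun s => γ (x + s)) (deriv γ (x + s)) s := by
    intro s
    have h1 : HasDerivAt (fun s : ℝ => x + s) 1 s := by
      simpa using (hasDerivAt_id s).const_add x
    have h2 := ((hγd (x + s)).hasDerivAt).scomp s h1
    rw [one_smul] at h2
    exact h2
  have hcont : Continuous (fun s => deriv γ (x + s)) :=
    hγ'.comp (continuous_const.add continuous_id)
  have hftc : ∫ s in (0:ℝ)..w, deriv γ (x + s) = γ (x + w) - γ x := by
    have := intervalIntegral.integral_eq_sub_of_hasDerivAt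
      (f := fun s => γ (x + s)) (fun t _ => hderiv t) (hcont.intervalIntegrable 0 w)
    simpa using this
  have hconst : ∫ s in (0:ℝ)..w, deriv γ x = w • deriv γ x := by
    simp
  have hΔ : Δ = ∫ s in (0:ℝ)..w, g s := by
    rw [hΔdef, ← hftc, ← hconst,
      ← intervalIntegral.integral_sub (hcont.intervalIntegrable 0 w) intervalIntegrable_const]
  have hnorm : ‖Δ‖ ≤ ∫ s in Set.uIoc 0 w, ‖g s‖ := by
    rw [hΔ]
    exact intervalIntegral.norm_integral_le_integral_norm_uIoc
  -- volume of uIoc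
  have hAvol : volume (Set.uIoc (0:ℝ) w) = ENNReal.ofReal |w| := by
    rw [Set.uIoc, Real.volume_Ioc]
    congr 1
    rcases le_total 0 w with h | h
    · simp [max_eq_right h, min_eq_left h, abs_of_nonneg h]
    · simp [max_eq_left h, min_eq_right h, abs_of_nonpos h]
  -- Hölder
  set G : ℝ → ℝ≥0∞ := fun s => ENNReal.ofReal ‖g s‖ with hG
  have hGm : Measurable G := (hgc.norm.measurable).ennreal_ofReal
  have hpq : q.HolderConjugate (q / (q - 1)) := (Real.holderConjugate_iff_eq_conjExponent hq).mpr rfl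
  have hone : ∫⁻ s in Set.uIoc 0 w, G s
      ≤ (∫⁻ s in Set.uIoc 0 w, (G s) ^ q) ^ (1/q) * (ENNReal.ofReal |w|) ^ (1 - 1/q) := by
    have hH := ENNReal.lintegral_mul_le_Lp_mul_Lq (volume.restrict (Set.uIoc 0 w)) hpq
      hGm.aemeasurable (aemeasurable_const (b := (1:ℝ≥0∞)))
    simp only [mul_one, Pi.mul_apply, Pi.one_apply, ENNReal.one_rpow, lintegral_const,
      Measure.restrict_apply_univ, one_mul] at hH
    rw [hAvol] at hH
    have h1q : 1 / (q / (q - 1)) = 1 - 1/q := by field_simp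
    rwa [h1q] at hH
  have hGq : ∀ s, (G s) ^ q = ENNReal.ofReal (‖g s‖ ^ q) := fun s =>
    ENNReal.ofReal_rpow_of_nonneg (norm_nonneg _) hq0.le
  -- the key estimate
  have hΔof : ENNReal.ofReal ‖Δ‖ ≤ ∫⁻ s in Set.uIoc 0 w, G s := by
    have h3 : ENNReal.ofReal (∫ s in Set.uIoc 0 w, ‖g s‖) = ∫⁻ s in Set.uIoc 0 w, G s := by
      have hint : IntegrableOn (fun s => ‖g s‖) (Set.uIoc 0 w) := hgc.norm.integrableOn_uIoc
      exact ofReal_integral_eq_lintegral_ofReal hint (ae_of_all _ fun s => norm_nonneg _)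
    rw [← h3]
    exact ENNReal.ofReal_le_ofReal hnorm
  have hwne : (ENNReal.ofReal |w|) ≠ 0 := by
    exact (ENNReal.ofReal_pos.mpr hw0).ne'
  have key : ENNReal.ofReal (‖Δ‖ ^ q)
      ≤ (∫⁻ s in Set.uIoc 0 w, ENNReal.ofReal (‖g s‖ ^ q)) * (ENNReal.ofReal |w|) ^ (q - 1) := by
    have h1 : ENNReal.ofReal (‖Δ‖ ^ q) = (ENNReal.ofReal ‖Δ‖) ^ q :=
      (ENNReal.ofReal_rpow_of_nonneg (norm_nonneg _) hq0.le).symm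
    rw [h1]
    calc (ENNReal.ofReal ‖Δ‖) ^ q
        ≤ ((∫⁻ s in Set.uIoc 0 w, (G s) ^ q) ^ (1/q) * (ENNReal.ofReal |w|) ^ (1 - 1/q)) ^ q :=
          ENNReal.rpow_le_rpow (hΔof.trans hone) hq0.le
      _ = (∫⁻ s in Set.uIoc 0 w, (G s) ^ q) * (ENNReal.ofReal |w|) ^ (q - 1) := by
          rw [ENNReal.mul_rpow_of_nonneg _ _ hq0.le, ← ENNReal.rpow_mul, ← ENNReal.rpow_mul,
            one_div_mul_cancel hq0.ne', ENNReal.rpow_one]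
          congr 1
          field_simp
      _ = (∫⁻ s in Set.uIoc 0 w, ENNReal.ofReal (‖g s‖ ^ q)) * (ENNReal.ofReal |w|) ^ (q - 1) := by
          congr 1
          exact lintegral_congr fun s => hGq s
  -- rewrite LHS and finish
  have hL : ENNReal.ofReal (‖Δ‖ ^ q / |w| ^ (2*q))
      = ENNReal.ofReal (‖Δ‖ ^ q) * (ENNReal.ofReal |w|) ^ (-(2*q)) := by
    rw [div_eq_mul_inv, ← Real.rpow_neg (abs_nonneg w),
      ENNReal.ofReal_mul (by positivity), ← ENNReal.ofReal_rpow_of_pos hw0]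
  rw [hL]
  calc ENNReal.ofReal (‖Δ‖ ^ q) * (ENNReal.ofReal |w|) ^ (-(2*q))
      ≤ ((∫⁻ s in Set.uIoc 0 w, ENNReal.ofReal (‖g s‖ ^ q)) * (ENNReal.ofReal |w|) ^ (q - 1))
          * (ENNReal.ofReal |w|) ^ (-(2*q)) := mul_le_mul_left key _
    _ = (ENNReal.ofReal |w|) ^ (-q-1) *
          ∫⁻ s in Set.uIoc 0 w, ENNReal.ofReal (‖g s‖ ^ q) := by
        rw [mul_assoc, ← ENNReal.rpow_add _ _ hwne ENNReal.ofReal_ne_top]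
        rw [mul_comm]
        congr 2
        ring

lemma inner_bound (q : ℝ) (hq : 1 < q) (γ : ℝ → EuclideanSpace ℝ (Fin 2))
    (hC1 : ContDiff ℝ 1 γ) (x : ℝ) :
    ∫⁻ w in Icc (-(1/2):ℝ) (1/2),
        ENNReal.ofReal (‖γ (x + w) - γ x - w • deriv γ x‖ ^ q / |w| ^ (2*q))
      ≤ ENNReal.ofReal (1/q) *
        ∫⁻ w in Icc (-(1/2):ℝ) (1/2),
          ENNReal.ofReal (‖deriv γ (x + w) - deriv γ x‖ ^ q / |w| ^ q) := by
  have hq0 : (0:ℝ) < q := by linarith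
  have hγ' : Continuous (deriv γ) := hC1.continuous_deriv le_rfl
  set F : ℝ → ℝ≥0∞ := fun s => ENNReal.ofReal (‖deriv γ (x + s) - deriv γ x‖ ^ q) with hF
  have hFc : Continuous fun s => ‖deriv γ (x + s) - deriv γ x‖ :=
    ((hγ'.comp (continuous_const.add continuous_id)).sub continuous_const).norm
  have hFm : Measurable F :=
    ((hFc.rpow_const fun s => Or.inr hq0.le).measurable).ennreal_ofReal
  set H : ℝ → ℝ≥0∞ := fun w => (ENNReal.ofReal |w|) ^ (-q-1) * ∫⁻ s in Set.uIoc 0 w, F s with hH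
  set K : ℝ → ℝ≥0∞ := fun s => (ENNReal.ofReal |s|) ^ (-q) * F s with hK
  have hpre1 : (Neg.neg ⁻¹' Ico (-(1/2):ℝ) 0) = Ioc (0:ℝ) (1/2) := by
    ext t
    simp only [mem_preimage, mem_Ico, mem_Ioc]
    constructor
    · rintro ⟨h1, h2⟩; constructor <;> linarith
    · rintro ⟨h1, h2⟩; constructor <;> linarith
  -- positive part
  have hpos : ∫⁻ w in Icc (0:ℝ) (1/2), H w
      ≤ ENNReal.ofReal (1/q) * ∫⁻ s in Ioc (0:ℝ) (1/2), K s := by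
    rw [← Measure.restrict_congr_set Ioc_ae_eq_Icc]
    have he : ∀ w ∈ Ioc (0:ℝ) (1/2), H w
        = (ENNReal.ofReal w) ^ (-q-1) * ∫⁻ s in Ioc (0:ℝ) w, F s := by
      intro w hw
      rw [hH]
      simp only
      rw [abs_of_pos hw.1, Set.uIoc_of_le hw.1.le]
    rw [setLIntegral_congr_fun_ae measurableSet_Ioc (ae_of_all _ he)]
    refine (hardy q hq F hFm).trans (le_of_eq ?_)
    congr 1
    refine setLIntegral_congr_fun_ae measurableSet_Ioc (ae_of_all _ fun s hs => ?_)
    rw [hK]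
    simp only
    rw [abs_of_pos hs.1]
  -- negative part
  have hneg : ∫⁻ w in Ico (-(1/2):ℝ) 0, H w
      ≤ ENNReal.ofReal (1/q) * ∫⁻ s in Ico (-(1/2):ℝ) 0, K s := by
    rw [lint_neg H _ measurableSet_Ico, hpre1]
    have h1 : ∀ v ∈ Ioc (0:ℝ) (1/2),
        H (-v) = (ENNReal.ofReal v) ^ (-q-1) * ∫⁻ s in Ioc (0:ℝ) v, F (-s) := by
      intro v hv
      have e1 : |(-v)| = v := by rw [abs_neg, abs_of_pos hv.1]
      have e2 : Set.uIoc 0 (-v) = Ioc (-v) 0 := by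
        rw [Set.uIoc_comm, Set.uIoc_of_le (by linarith [hv.1] : -v ≤ 0)]
      have e3 : ∫⁻ s in Ioc (-v) 0, F s = ∫⁻ s in Ioc (0:ℝ) v, F (-s) := by
        rw [lint_neg F _ measurableSet_Ioc]
        have : Neg.neg ⁻¹' Ioc (-v) 0 = Ico 0 v := by
          ext t
          simp only [mem_preimage, mem_Ioc, mem_Ico]
          constructor
          · rintro ⟨h1, h2⟩; constructor <;> linarith
          · rintro ⟨h1, h2⟩; constructor <;> linarith
        rw [this, Measure.restrict_congr_set Ico_ae_eq_Ioc]
      rw [hH]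
      simp only
      rw [e1, e2, e3]
    rw [setLIntegral_congr_fun_ae measurableSet_Ioc (ae_of_all _ h1)]
    refine (hardy q hq (fun s => F (-s)) (hFm.comp measurable_neg)).trans (le_of_eq ?_)
    congr 1
    have h2 : ∫⁻ s in Ioc (0:ℝ) (1/2), (ENNReal.ofReal s) ^ (-q) * F (-s)
        = ∫⁻ s in Ioc (0:ℝ) (1/2), K (-s) := by
      refine setLIntegral_congr_fun_ae measurableSet_Ioc (ae_of_all _ fun s hs => ?_)
      rw [hK]
      simp only
      rw [abs_neg, abs_of_pos hs.1]
    rw [h2, lint_neg K _ measurableSet_Ico, hpre1]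
  -- combine
  have hsplit : Icc (-(1/2):ℝ) (1/2) = Ico (-(1/2):ℝ) 0 ∪ Icc 0 (1/2) :=
    (Ico_union_Icc_eq_Icc (by norm_num) (by norm_num)).symm
  have hdisj : Disjoint (Ico (-(1/2):ℝ) 0) (Icc 0 (1/2)) := by
    refine Set.disjoint_left.mpr fun t ht ht' => ?_
    exact absurd ht'.1 (not_le.mpr ht.2)
  have hdisj2 : Disjoint (Ico (-(1/2):ℝ) 0) (Ioc 0 (1/2)) := by
    refine Set.disjoint_left.mpr fun t ht ht' => ?_
    exact absurd ht'.1 (not_lt.mpr ht.2.le)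
  have hne : ∀ᵐ s : ℝ ∂volume, s ≠ 0 := by
    rw [ae_iff]
    have : {a : ℝ | ¬ a ≠ 0} = {0} := by ext a; simp
    rw [this]
    exact measure_singleton 0
  calc ∫⁻ w in Icc (-(1/2):ℝ) (1/2),
        ENNReal.ofReal (‖γ (x + w) - γ x - w • deriv γ x‖ ^ q / |w| ^ (2*q))
      ≤ ∫⁻ w in Icc (-(1/2):ℝ) (1/2), H w :=
        setLIntegral_mono' measurableSet_Icc fun w _ => claim1 q hq γ hC1 x w
    _ = (∫⁻ w in Ico (-(1/2):ℝ) 0, H w) + ∫⁻ w in Icc (0:ℝ) (1/2), H w := by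
        rw [hsplit, lintegral_union measurableSet_Icc hdisj]
    _ ≤ ENNReal.ofReal (1/q) * (∫⁻ s in Ico (-(1/2):ℝ) 0, K s)
        + ENNReal.ofReal (1/q) * ∫⁻ s in Ioc (0:ℝ) (1/2), K s := add_le_add hneg hpos
    _ = ENNReal.ofReal (1/q) *
        ((∫⁻ s in Ico (-(1/2):ℝ) 0, K s) + ∫⁻ s in Ioc (0:ℝ) (1/2), K s) := by
        rw [mul_add]
    _ = ENNReal.ofReal (1/q) * ∫⁻ s in Ico (-(1/2):ℝ) 0 ∪ Ioc 0 (1/2), K s := by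
        rw [lintegral_union measurableSet_Ioc hdisj2]
    _ ≤ ENNReal.ofReal (1/q) * ∫⁻ s in Icc (-(1/2):ℝ) (1/2), K s := by
        refine mul_le_mul_right (lintegral_mono_set ?_) _
        intro t ht
        rcases ht with ht | ht
        · exact ⟨ht.1, by linarith [ht.2]⟩
        · exact ⟨by linarith [ht.1], ht.2⟩
    _ = ENNReal.ofReal (1/q) * ∫⁻ w in Icc (-(1/2):ℝ) (1/2),
          ENNReal.ofReal (‖deriv γ (x + w) - deriv γ x‖ ^ q / |w| ^ q) := by
        congr 1
        refine setLIntegral_congr_fun_ae measurableSet_Icc ?_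
        filter_upwards [hne] with s hs0 _
        rw [hK]
        simp only
        rw [div_eq_mul_inv, ← Real.rpow_neg (abs_nonneg s),
          ENNReal.ofReal_mul (by positivity),
          ← ENNReal.ofReal_rpow_of_pos (abs_pos.mpr hs0), mul_comm]

theorem stmt4 (q : ℝ) (hq : 2 < q) (γ : ℝ → EuclideanSpace ℝ (Fin 2))
    (hper : ∀ t, γ (t + 1) = γ t) (hC1 : ContDiff ℝ 1 γ)
    (harc : ∀ t, ‖deriv γ t‖ = 1)
    (hsob : gagliardo q (deriv γ) < ⊤)
    (D : Set (ℝ × ℝ)) (hD : D ⊆ Ioc (0 : ℝ) 1 ×ˢ Icc (-(1/2) : ℝ) (1/2))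
    (c : ℝ) (hc : 0 < c)
    (hbil : ∀ p ∈ D, |p.2| ≤ c * ‖γ (p.1 + p.2) - γ p.1‖) :
    tpE q γ D ≤ ENNReal.ofReal ((2 * c ^ 2) ^ q * (1 / q)) * gagliardo q (deriv γ) ∧
      tpE q γ D < ⊤ := by
  have hq1 : 1 < q := by linarith
  have hq0 : (0:ℝ) < q := by linarith
  have hγc : Continuous γ := hC1.continuous
  have hγ' : Continuous (deriv γ) := hC1.continuous_deriv le_rfl
  set Gm : ℝ × ℝ → ℝ≥0∞ := fun p =>
    ENNReal.ofReal (‖γ (p.1 + p.2) - γ p.1 - p.2 • deriv γ p.1‖ ^ q / |p.2| ^ (2*q)) with hGm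
  have hGmm : Measurable Gm := by
    have h1 : Continuous fun p : ℝ × ℝ => γ (p.1 + p.2) - γ p.1 - p.2 • deriv γ p.1 :=
      ((hγc.comp (continuous_fst.add continuous_snd)).sub (hγc.comp continuous_fst)).sub
        (continuous_snd.smul (hγ'.comp continuous_fst))
    have h2 : Continuous fun p : ℝ × ℝ => ‖γ (p.1 + p.2) - γ p.1 - p.2 • deriv γ p.1‖ ^ q :=
      h1.norm.rpow_const fun p => Or.inr hq0.le
    have h3 : Continuous fun p : ℝ × ℝ => |p.2| ^ (2*q) :=
      (continuous_snd.abs).rpow_const fun p => Or.inr (by positivity)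
    exact (h2.measurable.div h3.measurable).ennreal_ofReal
  -- pointwise bound on D
  have stepA : ∀ p ∈ D, ENNReal.ofReal
      ((2 * Metric.infDist (γ (p.1 + p.2)) (tangentLine γ p.1) /
        ‖γ (p.1 + p.2) - γ p.1‖ ^ 2) ^ q)
      ≤ ENNReal.ofReal ((2 * c ^ 2) ^ q) * Gm p := by
    rintro ⟨x, w⟩ hp
    set d := Metric.infDist (γ (x + w)) (tangentLine γ x) with hd
    set r := ‖γ (x + w) - γ x‖ with hr
    set Δ := γ (x + w) - γ x - w • deriv γ x with hΔ
    have hd0 : 0 ≤ d := Metric.infDist_nonneg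
    have hdle : d ≤ ‖Δ‖ := by
      have hmem : γ x + w • deriv γ x ∈ tangentLine γ x := ⟨w, rfl⟩
      have := Metric.infDist_le_dist_of_mem (x := γ (x + w)) hmem
      rwa [dist_eq_norm, sub_add_eq_sub_sub] at this
    by_cases hw : w = 0
    · have hΔ0 : Δ = 0 := by
        rw [hΔ, hw]
        simp [hper]  -- γ (x+0) - γ x - 0 = 0
      have hd00 : d = 0 := le_antisymm (by rw [← norm_zero (E := EuclideanSpace ℝ (Fin 2)), ← hΔ0]; exact hdle) hd0
      rw [hd00]
      rw [mul_zero, zero_div, Real.zero_rpow hq0.ne']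
      simp
    · have hwpos : 0 < |w| := abs_pos.mpr hw
      have hrle := hbil ⟨x, w⟩ hp
      simp only at hrle
      have hrpos : 0 < r := by nlinarith
      have base : 2 * d / r ^ 2 ≤ 2 * c ^ 2 * ‖Δ‖ / w ^ 2 := by
        rw [div_le_div_iff₀ (by positivity) (by positivity)]
        have hw2 : w ^ 2 ≤ c ^ 2 * r ^ 2 := by nlinarith [abs_nonneg w, sq_abs w]
        nlinarith [norm_nonneg Δ]
      have hup : (2 * d / r ^ 2) ^ q ≤ (2 * c ^ 2 * ‖Δ‖ / w ^ 2) ^ q :=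
        Real.rpow_le_rpow (by positivity) base hq0.le
      have hex : (2 * c ^ 2 * ‖Δ‖ / w ^ 2) ^ q
          = (2 * c ^ 2) ^ q * (‖Δ‖ ^ q / |w| ^ (2*q)) := by
        have hwsq : w ^ 2 = |w| ^ (2:ℕ) := (sq_abs w).symm
        rw [mul_div_assoc, Real.mul_rpow (by positivity) (by positivity),
          Real.div_rpow (norm_nonneg _) (by positivity), hwsq,
          ← Real.rpow_natCast |w| 2, ← Real.rpow_mul (abs_nonneg w)]
        norm_num
      calc ENNReal.ofReal ((2 * d / r ^ 2) ^ q)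
          ≤ ENNReal.ofReal ((2 * c ^ 2) ^ q * (‖Δ‖ ^ q / |w| ^ (2*q))) := by
            rw [← hex]; exact ENNReal.ofReal_le_ofReal hup
        _ = ENNReal.ofReal ((2 * c ^ 2) ^ q) * Gm (x, w) := by
            rw [ENNReal.ofReal_mul (by positivity)]
  -- main chain
  have main : tpE q γ D
      ≤ ENNReal.ofReal ((2 * c ^ 2) ^ q * (1 / q)) * gagliardo q (deriv γ) := by
    have tonelli : ∫⁻ p in (Ioc (0:ℝ) 1 ×ˢ Icc (-(1/2):ℝ) (1/2)), Gm p
        = ∫⁻ x in Ioc (0:ℝ) 1, ∫⁻ w in Icc (-(1/2):ℝ) (1/2), Gm (x, w) := by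
      rw [Measure.volume_eq_prod, ← Measure.prod_restrict, lintegral_prod _ hGmm.aemeasurable]
    calc tpE q γ D
        ≤ ∫⁻ p in D, ENNReal.ofReal ((2 * c ^ 2) ^ q) * Gm p :=
          setLIntegral_mono (measurable_const.mul hGmm) stepA
      _ ≤ ∫⁻ p in (Ioc (0:ℝ) 1 ×ˢ Icc (-(1/2):ℝ) (1/2)),
            ENNReal.ofReal ((2 * c ^ 2) ^ q) * Gm p := lintegral_mono_set hD
      _ = ENNReal.ofReal ((2 * c ^ 2) ^ q) *
            ∫⁻ p in (Ioc (0:ℝ) 1 ×ˢ Icc (-(1/2):ℝ) (1/2)), Gm p :=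
          lintegral_const_mul' _ _ ENNReal.ofReal_ne_top
      _ = ENNReal.ofReal ((2 * c ^ 2) ^ q) *
            ∫⁻ x in Ioc (0:ℝ) 1, ∫⁻ w in Icc (-(1/2):ℝ) (1/2), Gm (x, w) := by rw [tonelli]
      _ ≤ ENNReal.ofReal ((2 * c ^ 2) ^ q) *
            ∫⁻ x in Ioc (0:ℝ) 1, ENNReal.ofReal (1/q) *
              ∫⁻ w in Icc (-(1/2):ℝ) (1/2),
                ENNReal.ofReal (‖deriv γ (x + w) - deriv γ x‖ ^ q / |w| ^ q) := by
          refine mul_le_mul_right (lintegral_mono fun x => ?_) _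
          exact inner_bound q hq1 γ hC1 x
      _ = ENNReal.ofReal ((2 * c ^ 2) ^ q) * (ENNReal.ofReal (1/q) * gagliardo q (deriv γ)) := by
          rw [gagliardo, lintegral_const_mul' _ _ ENNReal.ofReal_ne_top]
      _ = ENNReal.ofReal ((2 * c ^ 2) ^ q * (1 / q)) * gagliardo q (deriv γ) := by
          rw [← mul_assoc, ← ENNReal.ofReal_mul (by positivity)]
  refine ⟨main, lt_of_le_of_lt main ?_⟩
  exact ENNReal.mul_lt_top ENNReal.ofReal_lt_top hsob
end

section
/- For unit vectors a, b ∈ S¹ ⊂ ℝ², one has ⟨a, b⟩ = 1 - |a - b|²/2. Consequently, for an arclength-parametrized C¹ curve γ with |γ'(t) - γ'(t')| ≤ 1/2 for all parameters t, t' in a subinterval I, and for x, x+w ∈ I, the quantity N := ⟨Δγ, γ'(x+w) - γ'(x)⟩² + 2⟨Δγ, γ'(x+w)⟩⟨Δγ, γ'(x)⟩(1 - ⟨γ'(x+w), γ'(x)⟩), where Δγ = γ(x+w) - γ(x), satisfies N ≥ (7/8)² w² |γ'(x+w) - γ'(x)|². -/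
open Set
open scoped RealInnerProductSpace

lemma unit_inner {E : Type*} [NormedAddCommGroup E] [InnerProductSpace ℝ E]
    (a b : E) (ha : ‖a‖ = 1) (hb : ‖b‖ = 1) : ⟪a, b⟫ = 1 - ‖a - b‖ ^ 2 / 2 := by
  have h := @norm_sub_sq_real E _ _ a b
  rw [ha, hb] at h
  nlinarith [h]

lemma key_lemma (γ : ℝ → EuclideanSpace ℝ (Fin 2)) (hγ : ContDiff ℝ 1 γ)
    (hunit : ∀ t, ‖deriv γ t‖ = 1) (I : Set ℝ) (hI : I.OrdConnected)
    (hosc : ∀ t ∈ I, ∀ t' ∈ I, ‖deriv γ t - deriv γ t'‖ ≤ 1/2)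
    (x w : ℝ) (hw : 0 ≤ w) (hx : x ∈ I) (hxw : x + w ∈ I)
    (t₀ : ℝ) (ht₀ : t₀ ∈ I) :
    7/8 * w ≤ ⟪γ (x + w) - γ x, deriv γ t₀⟫ := by
  have hcont : Continuous (deriv γ) := hγ.continuous_deriv le_rfl
  have hint : IntervalIntegrable (deriv γ) MeasureTheory.volume x (x + w) :=
    hcont.intervalIntegrable _ _
  have hFTC : ∫ s in x..(x + w), deriv γ s = γ (x + w) - γ x :=
    intervalIntegral.integral_deriv_eq_sub
      (fun t _ => (hγ.differentiable one_ne_zero) t) hint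
  set u := deriv γ t₀ with hu
  have hcomm : ⟪γ (x + w) - γ x, u⟫ = ∫ s in x..(x + w), ⟪deriv γ s, u⟫ := by
    have := ((innerSL ℝ).flip u).intervalIntegral_comp_comm hint (a := x) (b := x + w)
    simp only [ContinuousLinearMap.flip_apply, innerSL_apply_apply] at this
    rw [← hFTC, ← this]
  rw [hcomm]
  have hsub : Icc x (x + w) ⊆ I := hI.out hx hxw
  have hconst : (7/8 : ℝ) * w = ∫ _ in x..(x + w), (7/8 : ℝ) := by
    simp; ring
  rw [hconst]
  apply intervalIntegral.integral_mono_on (by linarith)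
    (intervalIntegrable_const)
    ((hcont.inner continuous_const).intervalIntegrable _ _)
  intro s hs
  have hsI : s ∈ I := hsub hs
  have hle : ‖deriv γ s - u‖ ≤ 1/2 := hosc s hsI t₀ ht₀
  have h1 : ⟪deriv γ s, u⟫ = 1 - ‖deriv γ s - u‖ ^ 2 / 2 :=
    unit_inner _ _ (hunit s) (hunit t₀)
  have h0 : (0:ℝ) ≤ ‖deriv γ s - u‖ := norm_nonneg _
  nlinarith [h1]

theorem stmt5 :
    (∀ a b : EuclideanSpace ℝ (Fin 2), ‖a‖ = 1 → ‖b‖ = 1 →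
      ⟪a, b⟫ = 1 - ‖a - b‖ ^ 2 / 2) ∧
    ∀ (γ : ℝ → EuclideanSpace ℝ (Fin 2)), ContDiff ℝ 1 γ → (∀ t, ‖deriv γ t‖ = 1) →
      ∀ I : Set ℝ, I.OrdConnected →
      (∀ t ∈ I, ∀ t' ∈ I, ‖deriv γ t - deriv γ t'‖ ≤ 1/2) →
      ∀ x w : ℝ, x ∈ I → x + w ∈ I →
        ⟪γ (x + w) - γ x, deriv γ (x + w) - deriv γ x⟫ ^ 2 +
            2 * ⟪γ (x + w) - γ x, deriv γ (x + w)⟫ * ⟪γ (x + w) - γ x, deriv γ x⟫ *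
              (1 - ⟪deriv γ (x + w), deriv γ x⟫) ≥
          (7/8) ^ 2 * w ^ 2 * ‖deriv γ (x + w) - deriv γ x‖ ^ 2 := by
  constructor
  · exact fun a b ha hb => unit_inner a b ha hb
  intro γ hγ hunit I hI hosc x w hx hxw
  set u := deriv γ x
  set v := deriv γ (x + w)
  set Δ := γ (x + w) - γ x with hΔ
  have hvu : ⟪v, u⟫ = 1 - ‖v - u‖ ^ 2 / 2 := unit_inner _ _ (hunit _) (hunit _)
  -- product bound
  have hprod : ⟪Δ, v⟫ * ⟪Δ, u⟫ ≥ (7/8) ^ 2 * w ^ 2 := by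
    rcases le_or_gt 0 w with hw | hw
    · have h1 := key_lemma γ hγ hunit I hI hosc x w hw hx hxw x hx
      have h2 := key_lemma γ hγ hunit I hI hosc x w hw hx hxw (x + w) hxw
      nlinarith [h1, h2, mul_nonneg (by linarith : (0:ℝ) ≤ 7/8 * w) (by linarith : (0:ℝ) ≤ 7/8 * w)]
    · have hw' : 0 ≤ -w := by linarith
      have hxww : x + w + -w ∈ I := by simpa using hx
      have h1 := key_lemma γ hγ hunit I hI hosc (x + w) (-w) hw' hxw hxww x hx
      have h2 := key_lemma γ hγ hunit I hI hosc (x + w) (-w) hw' hxw hxww (x + w) hxw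
      have he : γ (x + w + -w) - γ (x + w) = -Δ := by
        rw [hΔ]; rw [show x + w + -w = x by ring]; abel
      rw [he, inner_neg_left] at h1 h2
      nlinarith [h1, h2]
  have hsq : (0:ℝ) ≤ ⟪Δ, v - u⟫ ^ 2 := sq_nonneg _
  have hnn : (0:ℝ) ≤ ‖v - u‖ ^ 2 := sq_nonneg _
  nlinarith [hprod, hsq, hnn, hvu]
end

section
/- Let α ∈ (0, π/2] and define f_α(z) = (z - cot α)/(z² + 1) for z ∈ [cot α, cot(α/2)]. Then f_α attains its maximum on this interval at z₂ = cot(α/2), with maximum value f_α(z₂) = (1/2) tan(α/2), and moreover 0 ≤ 4 cot α · f_α(z) ≤ 2 cos α / (1 + cos α) ≤ 1 for all z in the interval. -/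
open Real Set

theorem stmt11 (α : ℝ) (hα : α ∈ Ioc 0 (π / 2)) :
    IsMaxOn (fun z => (z - cot α) / (z ^ 2 + 1)) (Icc (cot α) (cot (α / 2))) (cot (α / 2)) ∧
    (cot (α / 2) - cot α) / (cot (α / 2) ^ 2 + 1) = (1/2) * tan (α / 2) ∧
    ∀ z ∈ Icc (cot α) (cot (α / 2)),
      0 ≤ 4 * cot α * ((z - cot α) / (z ^ 2 + 1)) ∧
      4 * cot α * ((z - cot α) / (z ^ 2 + 1)) ≤ 2 * cos α / (1 + cos α) ∧
      2 * cos α / (1 + cos α) ≤ 1 := by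
  obtain ⟨h0, h2⟩ := hα
  have hpi := pi_pos
  have hs : 0 < sin α := sin_pos_of_pos_of_lt_pi h0 (by linarith)
  have hs2 : 0 < sin (α/2) := sin_pos_of_pos_of_lt_pi (by linarith) (by linarith)
  have hc2 : 0 < cos (α/2) := cos_pos_of_mem_Ioo ⟨by linarith, by linarith⟩
  have hcos : 0 ≤ cos α := cos_nonneg_of_mem_Icc ⟨by linarith, h2⟩
  have pyth : sin (α/2)^2 + cos (α/2)^2 = 1 := sin_sq_add_cos_sq (α/2)
  have pyth' : sin (α/2)^2 + cos (α/2)^2 = 1 := pyth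
  have hsin2 : sin α = 2 * sin (α/2) * cos (α/2) := by
    have := sin_two_mul (α/2)
    rw [show 2*(α/2) = α by ring] at this
    linarith
  have hcos2 : cos α = cos (α/2)^2 - sin (α/2)^2 := by
    have h := cos_two_mul (α/2)
    rw [show 2*(α/2) = α by ring] at h
    nlinarith [pyth']
  have hA : cot α = cos α / sin α := cot_eq_cos_div_sin α
  have hB : cot (α/2) = cos (α/2) / sin (α/2) := cot_eq_cos_div_sin (α/2)
  have hAnn : 0 ≤ cot α := by rw [hA]; positivity
  have hkey : cot (α/2)^2 + 1 = 2 * cot (α/2) * (cot (α/2) - cot α) := by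
    rw [hA, hB, hsin2, hcos2]
    field_simp
    ring
  have hBA : cot (α/2) - cot α = 1 / sin α := by
    rw [hA, hB, hsin2, hcos2]
    field_simp
    linear_combination pyth
  have hBApos : 0 < cot (α/2) - cot α := by rw [hBA]; positivity
  have hmax : ∀ z ∈ Icc (cot α) (cot (α/2)),
      (z - cot α) / (z ^ 2 + 1) ≤ (cot (α/2) - cot α) / (cot (α/2) ^ 2 + 1) := by
    intro z hz
    have hd1 : (0:ℝ) < z^2 + 1 := by positivity
    have hd2 : (0:ℝ) < cot (α/2)^2 + 1 := by positivity
    rw [div_le_div_iff₀ hd1 hd2]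
    have hE : (cot (α/2) - cot α) * (z^2+1) - (z - cot α) * (cot (α/2)^2+1)
        = (cot (α/2) - cot α) * (z - cot (α/2))^2 := by
      linear_combination (cot (α/2) - z) * hkey
    nlinarith [mul_nonneg hBApos.le (sq_nonneg (z - cot (α/2)))]
  have hval : (cot (α/2) - cot α) / (cot (α/2) ^ 2 + 1) = (1/2) * tan (α/2) := by
    rw [hBA, tan_eq_sin_div_cos, hB, hsin2]
    field_simp
    linear_combination -pyth
  refine ⟨?_, hval, ?_⟩
  · intro z hz
    simp only [Set.mem_setOf_eq]
    exact hmax z hz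
  · intro z hz
    have hd1 : (0:ℝ) < z^2 + 1 := by positivity
    have h1c : (0:ℝ) < 1 + cos α := by linarith
    refine ⟨?_, ?_, ?_⟩
    · have : 0 ≤ z - cot α := by linarith [hz.1]
      positivity
    · have h1 := hmax z hz
      have h2 : 4 * cot α * ((z - cot α) / (z ^ 2 + 1))
          ≤ 4 * cot α * ((cot (α/2) - cot α) / (cot (α/2) ^ 2 + 1)) := by
        apply mul_le_mul_of_nonneg_left h1 (by linarith)
      have h3 : 4 * cot α * ((cot (α/2) - cot α) / (cot (α/2) ^ 2 + 1))
          = 2 * cos α / (1 + cos α) := by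
        have h2c : 1 + cos α = 2 * cos (α/2)^2 := by linarith [pyth, hcos2]
        rw [hval, tan_eq_sin_div_cos, hA, h2c, hsin2, hcos2]
        field_simp
        ring
      linarith
    · rw [div_le_one h1c]
      linarith [cos_le_one α]
end
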